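/- arXiv:2602.10691 — 2 statements merged into one kernel-verified Lean document; each statement's English description precedes it below -/
import Mathlib

section
/- Let A be a d×d positive semi-definite real matrix and θ uniformly distributed on the unit sphere of ℝ^d. Then for every integer p ≥ 1, E[(θᵀAθ)^p] ≤ Tr(A^p)/d ≤ λ_max(A)^{p−1}·Tr(A)/d. -/
open MeasureTheory

open Matrix

variable {d : ℕ}

noncomputable def matIso (M : Matrix (Fin d) (Fin d) ℝ)
    (hM : M ∈ Matrix.unitaryGroup (Fin d) ℝ) :
    EuclideanSpace ℝ (Fin d) ≃ₗᵢ[ℝ] EuclideanSpace ℝ (Fin d) :=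
  LinearEquiv.isometryOfInner
    { toFun := fun θ => WithLp.toLp 2 (M *ᵥ θ)
      invFun := fun θ => WithLp.toLp 2 (Mᵀ *ᵥ θ)
      map_add' := fun x y => congrArg (WithLp.toLp 2) (Matrix.mulVec_add M x y)
      map_smul' := fun c x => congrArg (WithLp.toLp 2) (Matrix.mulVec_smul M c x)
      left_inv := fun x => by
        have h : Mᵀ * M = 1 := by
          simpa [Matrix.star_eq_conjTranspose,
            Matrix.conjTranspose_eq_transpose_of_trivial] using hM.1
        show WithLp.toLp 2 (Mᵀ *ᵥ (M *ᵥ x.ofLp)) = x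
        rw [Matrix.mulVec_mulVec, h, Matrix.one_mulVec]
      right_inv := fun x => by
        have h : M * Mᵀ = 1 := by
          simpa [Matrix.star_eq_conjTranspose,
            Matrix.conjTranspose_eq_transpose_of_trivial] using hM.2
        show WithLp.toLp 2 (M *ᵥ (Mᵀ *ᵥ x.ofLp)) = x
        rw [Matrix.mulVec_mulVec, h, Matrix.one_mulVec] }
    (fun x y => by
      have h : Mᵀ * M = 1 := by
        simpa [Matrix.star_eq_conjTranspose,
          Matrix.conjTranspose_eq_transpose_of_trivial] using hM.1
      simp only [PiLp.inner_apply, RCLike.inner_apply, starRingEnd_apply, star_trivial]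
      show dotProduct (M *ᵥ y) (M *ᵥ x) = dotProduct (fun i => y i) (fun i => x i)
      rw [dotProduct_mulVec, Matrix.vecMul_mulVec, h, Matrix.vecMul_one])

theorem matIso_apply (M : Matrix (Fin d) (Fin d) ℝ) (hM) (θ : EuclideanSpace ℝ (Fin d)) (i : Fin d) :
    matIso M hM θ i = (M *ᵥ (fun j => θ j)) i := rfl

theorem pow_eq_aux (A : Matrix (Fin d) (Fin d) ℝ) (H : A.IsHermitian) (n : ℕ) :
    A ^ n = (H.eigenvectorUnitary : Matrix (Fin d) (Fin d) ℝ)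
      * (Matrix.diagonal H.eigenvalues) ^ n
      * star (H.eigenvectorUnitary : Matrix (Fin d) (Fin d) ℝ) := by
  set U : Matrix (Fin d) (Fin d) ℝ := (H.eigenvectorUnitary : Matrix (Fin d) (Fin d) ℝ) with hUdef
  have hU1 : star U * U = 1 := Matrix.mem_unitaryGroup_iff'.mp H.eigenvectorUnitary.2
  have hU2 : U * star U = 1 := Matrix.mem_unitaryGroup_iff.mp H.eigenvectorUnitary.2
  have hspec : A = U * Matrix.diagonal H.eigenvalues * star U := by
    have := H.spectral_theorem
    simpa using this
  obtain ⟨D, hD⟩ : ∃ D, Matrix.diagonal H.eigenvalues = D := ⟨_, rfl⟩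
  rw [hD] at hspec ⊢
  induction n with
  | zero => simpa using hU2.symm
  | succ m ih =>
    rw [pow_succ, ih, hspec, pow_succ]
    simp only [Matrix.mul_assoc]
    rw [← Matrix.mul_assoc (star U) U, hU1, Matrix.one_mul]

theorem trace_pow_eq (A : Matrix (Fin d) (Fin d) ℝ) (H : A.IsHermitian) (n : ℕ) :
    Matrix.trace (A ^ n) = ∑ i, H.eigenvalues i ^ n := by
  have hU1 : star (H.eigenvectorUnitary : Matrix (Fin d) (Fin d) ℝ)
      * H.eigenvectorUnitary = 1 := Matrix.mem_unitaryGroup_iff'.mp H.eigenvectorUnitary.2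
  rw [pow_eq_aux A H n, Matrix.trace_mul_comm, ← Matrix.mul_assoc, hU1, Matrix.one_mul,
    Matrix.diagonal_pow, Matrix.trace_diagonal]
  rfl


/-- For `A` positive semi-definite and `θ` uniform (rotation-invariant probability
measure) on the unit sphere of `ℝ^d`, for every integer `p ≥ 1`,
`E[(θᵀAθ)^p] ≤ Tr(A^p)/d ≤ λ_max(A)^(p-1) · Tr(A)/d`. -/
theorem stmt_4 (d : ℕ) (hd : 1 ≤ d)
    (μ : Measure (EuclideanSpace ℝ (Fin d))) [IsProbabilityMeasure μ]
    (hsupp : μ (Metric.sphere (0 : EuclideanSpace ℝ (Fin d)) 1) = 1)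
    (hinv : ∀ R : EuclideanSpace ℝ (Fin d) ≃ₗᵢ[ℝ] EuclideanSpace ℝ (Fin d),
      Measure.map R μ = μ)
    (A : Matrix (Fin d) (Fin d) ℝ) (hA : A.PosSemidef)
    (p : ℕ) (hp : 1 ≤ p) :
    (∫ θ, (dotProduct (fun i => θ i) (A.mulVec fun i => θ i)) ^ p ∂μ
        ≤ Matrix.trace (A ^ p) / d) ∧
    Matrix.trace (A ^ p) / d
        ≤ (⨆ i, hA.1.eigenvalues i) ^ (p - 1) * Matrix.trace A / d := by
  have : Nonempty (Fin d) := ⟨⟨0, hd⟩⟩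
  have hd0 : (0:ℝ) < d := by exact_mod_cast hd
  set lam := hA.1.eigenvalues with hlam
  have hlam0 : ∀ i, 0 ≤ lam i := hA.eigenvalues_nonneg
  have hbdd : BddAbove (Set.range lam) := (Set.finite_range lam).bddAbove
  have hlam_le : ∀ i, lam i ≤ ⨆ i, lam i := fun i => le_ciSup hbdd i
  have hmax0 : 0 ≤ ⨆ i, lam i := le_trans (hlam0 ⟨0, hd⟩) (hlam_le ⟨0, hd⟩)
  have htr : ∀ n, Matrix.trace (A ^ n) = ∑ i, lam i ^ n := trace_pow_eq A hA.1
  constructor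
  · -- first inequality
    -- the orthogonal change of variables
    set V : Matrix (Fin d) (Fin d) ℝ :=
      star (hA.1.eigenvectorUnitary : Matrix (Fin d) (Fin d) ℝ) with hV
    have hVmem : V ∈ Matrix.unitaryGroup (Fin d) ℝ := Unitary.star_mem hA.1.eigenvectorUnitary.2
    set R := matIso V hVmem with hR
    -- pointwise identity
    have hdot : ∀ θ : EuclideanSpace ℝ (Fin d),
        dotProduct (fun i => θ i) (A.mulVec fun i => θ i)
          = ∑ i, lam i * (R θ i) ^ 2 := by
      intro θ
      have hspec : A = (hA.1.eigenvectorUnitary : Matrix (Fin d) (Fin d) ℝ)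
          * Matrix.diagonal lam * V := by
        simpa using hA.1.spectral_theorem
      have hVt : V = (hA.1.eigenvectorUnitary : Matrix (Fin d) (Fin d) ℝ)ᵀ := by
        rw [hV, Matrix.star_eq_conjTranspose, Matrix.conjTranspose_eq_transpose_of_trivial]
      rw [hspec]
      rw [← Matrix.mulVec_mulVec, ← Matrix.mulVec_mulVec, dotProduct_mulVec]
      have hvm : (fun i => θ i) ᵥ* (hA.1.eigenvectorUnitary : Matrix (Fin d) (Fin d) ℝ)
          = V *ᵥ (fun i => θ i) := by
        rw [hVt, Matrix.mulVec_transpose]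
      rw [hvm]
      simp only [dotProduct, Matrix.mulVec_diagonal]
      refine Finset.sum_congr rfl fun i _ => ?_
      rw [matIso_apply]
      ring
    -- a.e. on the sphere
    have hsphmeas : MeasurableSet (Metric.sphere (0 : EuclideanSpace ℝ (Fin d)) 1) :=
      Metric.isClosed_sphere.measurableSet
    have hsph : ∀ᵐ θ ∂μ, θ ∈ Metric.sphere (0 : EuclideanSpace ℝ (Fin d)) 1 := by
      rw [ae_iff]
      have : {θ : EuclideanSpace ℝ (Fin d) | ¬ θ ∈ Metric.sphere (0 : EuclideanSpace ℝ (Fin d)) 1}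
          = (Metric.sphere (0 : EuclideanSpace ℝ (Fin d)) 1)ᶜ := rfl
      rw [this, prob_compl_eq_zero_iff hsphmeas]
      exact hsupp
    -- sum of squares of coordinates
    have hsq : ∀ x : EuclideanSpace ℝ (Fin d), ∑ i, (x i) ^ 2 = ‖x‖ ^ 2 := by
      intro x
      rw [EuclideanSpace.norm_eq, Real.sq_sqrt (by positivity)]
      simp [sq_abs]
    -- integrability helper
    have hInt : ∀ (f : EuclideanSpace ℝ (Fin d) → ℝ), Continuous f → ∀ C : ℝ,
        (∀ θ ∈ Metric.sphere (0 : EuclideanSpace ℝ (Fin d)) 1, |f θ| ≤ C) →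
        Integrable f μ := by
      intro f hf C hC
      exact (integrable_const C).mono' hf.aestronglyMeasurable
        (hsph.mono fun θ hθ => by rw [Real.norm_eq_abs]; exact hC θ hθ)
    have hcont_coord : ∀ i : Fin d, Continuous fun θ : EuclideanSpace ℝ (Fin d) => θ i :=
      fun i => (continuous_apply i).comp (PiLp.continuous_ofLp 2 _)
    have hcontR : ∀ i : Fin d, Continuous fun θ : EuclideanSpace ℝ (Fin d) => R θ i :=
      fun i => (hcont_coord i).comp R.continuous
    -- bound for coordinate squares on the sphere
    have hcoordsq_le : ∀ (x : EuclideanSpace ℝ (Fin d)),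
        x ∈ Metric.sphere (0 : EuclideanSpace ℝ (Fin d)) 1 → ∀ i, (x i) ^ 2 ≤ 1 := by
      intro x hx i
      have h1 : ∑ j, (x j) ^ 2 = 1 := by
        rw [hsq x, mem_sphere_zero_iff_norm.mp hx, one_pow]
      calc (x i) ^ 2 ≤ ∑ j, (x j) ^ 2 :=
            Finset.single_le_sum (fun j _ => sq_nonneg (x j)) (Finset.mem_univ i)
        _ = 1 := h1
    have hRsph : ∀ (θ : EuclideanSpace ℝ (Fin d)),
        θ ∈ Metric.sphere (0 : EuclideanSpace ℝ (Fin d)) 1 →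
        R θ ∈ Metric.sphere (0 : EuclideanSpace ℝ (Fin d)) 1 := by
      intro θ hθ
      rw [mem_sphere_zero_iff_norm] at hθ ⊢
      rw [R.norm_map, hθ]
    -- integrability of the pieces
    have hIntg : ∀ i, Integrable (fun θ => (R θ i) ^ 2) μ := by
      intro i
      refine hInt _ ((hcontR i).pow 2) 1 fun θ hθ => ?_
      rw [abs_of_nonneg (sq_nonneg _)]
      exact hcoordsq_le _ (hRsph θ hθ) i
    have hIntcoord : ∀ i, Integrable (fun θ : EuclideanSpace ℝ (Fin d) => (θ i) ^ 2) μ := by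
      intro i
      refine hInt _ ((hcont_coord i).pow 2) 1 fun θ hθ => ?_
      rw [abs_of_nonneg (sq_nonneg _)]
      exact hcoordsq_le _ hθ i
    -- the pointwise Jensen bound
    have key : ∀ᵐ θ ∂μ,
        (dotProduct (fun i => θ i) (A.mulVec fun i => θ i)) ^ p
          ≤ ∑ i, lam i ^ p * (R θ i) ^ 2 := by
      refine hsph.mono fun θ hθ => ?_
      have hw1 : ∑ i, (R θ i) ^ 2 = 1 := by
        rw [hsq (R θ), (mem_sphere_zero_iff_norm.mp (hRsph θ hθ)), one_pow]
      rw [hdot θ]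
      have h1 : (∑ i, lam i * (R θ i) ^ 2) = ∑ i, (R θ i) ^ 2 * lam i :=
        Finset.sum_congr rfl fun i _ => mul_comm _ _
      rw [h1]
      calc (∑ i, (R θ i) ^ 2 * lam i) ^ p ≤ ∑ i, (R θ i) ^ 2 * lam i ^ p :=
            Real.pow_arith_mean_le_arith_mean_pow Finset.univ _ _
              (fun i _ => sq_nonneg _) hw1 (fun i _ => hlam0 i) p
        _ = ∑ i, lam i ^ p * (R θ i) ^ 2 :=
            Finset.sum_congr rfl fun i _ => mul_comm _ _
    -- integrability of LHS
    have hIntLHS : Integrable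
        (fun θ => (dotProduct (fun i => θ i) (A.mulVec fun i => θ i)) ^ p) μ := by
      have hfun : (fun θ : EuclideanSpace ℝ (Fin d) =>
          (dotProduct (fun i => θ i) (A.mulVec fun i => θ i)) ^ p)
          = fun θ => (∑ i, lam i * (R θ i) ^ 2) ^ p := funext fun θ => by rw [hdot θ]
      rw [hfun]
      refine hInt _ ((continuous_finset_sum Finset.univ fun i _ =>
        continuous_const.mul ((hcontR i).pow 2)).pow p) ((∑ i, lam i) ^ p) fun θ hθ => ?_
      have h0 : 0 ≤ ∑ i, lam i * (R θ i) ^ 2 :=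
        Finset.sum_nonneg fun i _ => mul_nonneg (hlam0 i) (sq_nonneg _)
      have hle : ∑ i, lam i * (R θ i) ^ 2 ≤ ∑ i, lam i := by
        refine Finset.sum_le_sum fun i _ => ?_
        calc lam i * (R θ i) ^ 2 ≤ lam i * 1 :=
              mul_le_mul_of_nonneg_left (hcoordsq_le _ (hRsph θ hθ) i) (hlam0 i)
          _ = lam i := mul_one _
      rw [abs_of_nonneg (pow_nonneg h0 p)]
      exact pow_le_pow_left₀ h0 hle p
    have hIntRHS : Integrable (fun θ => ∑ i, lam i ^ p * (R θ i) ^ 2) μ :=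
      integrable_finset_sum _ fun i _ => (hIntg i).const_mul _
    -- expectation of coordinate squares
    have hmapint : ∀ (S : EuclideanSpace ℝ (Fin d) ≃ₗᵢ[ℝ] EuclideanSpace ℝ (Fin d))
        (f : EuclideanSpace ℝ (Fin d) → ℝ), Continuous f →
        ∫ θ, f (S θ) ∂μ = ∫ θ, f θ ∂μ := by
      intro S f hf
      conv_rhs => rw [← hinv S]
      rw [integral_map S.continuous.aemeasurable hf.aestronglyMeasurable]
    have hcoord_swap : ∀ i j : Fin d,
        ∫ θ, (θ i : ℝ) ^ 2 ∂μ = ∫ θ, (θ j : ℝ) ^ 2 ∂μ := by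
      intro i j
      set S : EuclideanSpace ℝ (Fin d) ≃ₗᵢ[ℝ] EuclideanSpace ℝ (Fin d) :=
        LinearIsometryEquiv.piLpCongrLeft 2 ℝ ℝ (Equiv.swap i j) with hS
      have hSa : ∀ θ : EuclideanSpace ℝ (Fin d), S θ i = θ j := by
        intro θ
        show θ ((Equiv.swap i j).symm i) = θ j
        rw [Equiv.symm_swap, Equiv.swap_apply_left]
      have := hmapint S (fun θ => (θ i) ^ 2) ((hcont_coord i).pow 2)
      rw [← this]
      refine integral_congr_ae (Filter.Eventually.of_forall fun θ => ?_)
      show S θ i ^ 2 = θ j ^ 2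
      rw [hSa θ]
    have hsum1 : ∑ i, ∫ θ, (θ i : ℝ) ^ 2 ∂μ = 1 := by
      rw [← integral_finset_sum _ fun i _ => hIntcoord i]
      have : ∫ θ, (∑ i, (θ i : ℝ) ^ 2) ∂μ = ∫ _θ, (1:ℝ) ∂μ := by
        refine integral_congr_ae (hsph.mono fun θ hθ => ?_)
        show (∑ i, (θ i : ℝ) ^ 2) = 1
        rw [hsq θ, mem_sphere_zero_iff_norm.mp hθ, one_pow]
      rw [this, integral_const, probReal_univ]
      simp
    have hcoordval : ∀ i, ∫ θ, (θ i : ℝ) ^ 2 ∂μ = 1 / d := by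
      intro i
      have hall : ∀ j, ∫ θ, (θ j : ℝ) ^ 2 ∂μ = ∫ θ, (θ i : ℝ) ^ 2 ∂μ :=
        fun j => hcoord_swap j i
      have : (d : ℝ) * ∫ θ, (θ i : ℝ) ^ 2 ∂μ = 1 := by
        rw [← hsum1, Finset.sum_congr rfl fun j _ => hall j]
        simp [Finset.sum_const, mul_comm]
      field_simp at this ⊢
      linarith
    have hgval : ∀ i, ∫ θ, (R θ i) ^ 2 ∂μ = 1 / d := by
      intro i
      have := hmapint R (fun θ => (θ i) ^ 2) ((hcont_coord i).pow 2)
      rw [this]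
      exact hcoordval i
    calc ∫ θ, (dotProduct (fun i => θ i) (A.mulVec fun i => θ i)) ^ p ∂μ
        ≤ ∫ θ, ∑ i, lam i ^ p * (R θ i) ^ 2 ∂μ := integral_mono_ae hIntLHS hIntRHS key
      _ = ∑ i, lam i ^ p * ∫ θ, (R θ i) ^ 2 ∂μ := by
          rw [integral_finset_sum _ fun i _ => (hIntg i).const_mul _]
          exact Finset.sum_congr rfl fun i _ => integral_const_mul _ _
      _ = ∑ i, lam i ^ p * (1 / d) := Finset.sum_congr rfl fun i _ => by rw [hgval i]
      _ = Matrix.trace (A ^ p) / d := by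
          rw [htr p, Finset.sum_div]
          exact Finset.sum_congr rfl fun i _ => by ring
  · -- second inequality
    have htrA : Matrix.trace A = ∑ i, lam i := by simpa using htr 1
    rw [htr p, htrA]
    rw [div_le_div_iff_of_pos_right hd0]
    calc ∑ i, lam i ^ p ≤ ∑ i, (⨆ j, lam j) ^ (p - 1) * lam i := by
          refine Finset.sum_le_sum fun i _ => ?_
          have : lam i ^ p = lam i ^ (p - 1) * lam i := by
            rw [← pow_succ, Nat.sub_add_cancel hp]
          rw [this]
          exact mul_le_mul_of_nonneg_right
            (pow_le_pow_left₀ (hlam0 i) (hlam_le i) _) (hlam0 i)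
      _ = (⨆ j, lam j) ^ (p - 1) * ∑ i, lam i := by rw [Finset.mul_sum]
end

section
/- Let (y_k) be a nonnegative real sequence satisfying y_{k+1} ≤ (1 − 1/(k+1))·y_k + C/(k+1)^{2α} for all k ≥ 1, where C > 0 and 1/2 < α < 1. Then there exists a constant C' > 0 such that y_k ≤ C'/k^{2α−1} for all k ≥ 1. -/
/-- Chung-type lemma: if a nonnegative sequence satisfies
`y_{k+1} ≤ (1 - 1/(k+1)) y_k + C/(k+1)^{2α}` for all `k ≥ 1` with `C > 0` and
`1/2 < α < 1`, then `y_k ≤ C'/k^{2α-1}` for some constant `C' > 0`. -/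
theorem stmt_9 (y : ℕ → ℝ) (hy : ∀ k, 0 ≤ y k) (C α : ℝ) (hC : 0 < C)
    (hα₁ : 1 / 2 < α) (hα₂ : α < 1)
    (hrec : ∀ k, 1 ≤ k →
      y (k + 1) ≤ (1 - 1 / ((k : ℝ) + 1)) * y k + C / ((k : ℝ) + 1) ^ (2 * α)) :
    ∃ C' > 0, ∀ k, 1 ≤ k → y k ≤ C' / (k : ℝ) ^ (2 * α - 1) := by
  set β : ℝ := 2 * α - 1 with hβdef
  have hβ0 : 0 < β := by simp only [hβdef]; linarith
  have hβ1 : β < 1 := by simp only [hβdef]; linarith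
  set C' : ℝ := max (C / (1 - β)) (y 1) with hC'def
  have hCle : C ≤ C' * (1 - β) := by
    have h1 : C / (1 - β) ≤ C' := le_max_left _ _
    have h2 : (0:ℝ) < 1 - β := by linarith
    calc C = C / (1 - β) * (1 - β) := by field_simp
    _ ≤ C' * (1 - β) := by nlinarith
  have hC'pos : 0 < C' :=
    lt_of_lt_of_le (div_pos hC (by linarith)) (le_max_left _ _)
  refine ⟨C', hC'pos, ?_⟩
  intro k hk
  induction k, hk using Nat.le_induction with
  | base =>
    have h1 : ((1:ℕ):ℝ) ^ β = 1 := by norm_num [Real.one_rpow]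
    rw [h1, div_one, hC'def]
    exact le_max_right _ _
  | succ k hk ih =>
    set K : ℝ := (k : ℝ) with hKdef
    have hK : 1 ≤ K := hKdef ▸ (by exact_mod_cast hk : (1:ℝ) ≤ (k:ℝ))
    have hKpos : (0:ℝ) < K := by linarith
    have hx : (0:ℝ) < K + 1 := by linarith
    have hA : (0:ℝ) < K ^ β := Real.rpow_pos_of_pos hKpos β
    have hB : (0:ℝ) < (K + 1) ^ β := Real.rpow_pos_of_pos hx β
    have hcoef : (0:ℝ) ≤ 1 - 1 / (K + 1) := by
      have : 1 / (K + 1) ≤ 1 := by rw [div_le_one hx]; linarith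
      linarith
    -- Bernoulli step
    have hber : (1 - 1 / (K + 1)) ^ (1 - β) ≤ 1 - (1 - β) / (K + 1) := by
      have hs : (-1:ℝ) ≤ -(1 / (K + 1)) := by
        rw [neg_le_neg_iff]
        rw [div_le_one hx]; linarith
      have := rpow_one_add_le_one_add_mul_self (s := -(1 / (K + 1))) hs
        (p := 1 - β) (by linarith) (by linarith)
      calc (1 - 1 / (K + 1)) ^ (1 - β) = (1 + -(1 / (K + 1))) ^ (1 - β) := by ring_nf
        _ ≤ 1 + (1 - β) * -(1 / (K + 1)) := this
        _ = 1 - (1 - β) / (K + 1) := by ring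
    have e1 : K ^ ((1:ℝ) - β) = K / K ^ β := by
      rw [Real.rpow_sub hKpos, Real.rpow_one]
    have e2 : (K + 1) ^ ((1:ℝ) - β) = (K + 1) / (K + 1) ^ β := by
      rw [Real.rpow_sub hx, Real.rpow_one]
    have h2 : K ^ ((1:ℝ) - β) = (K + 1) ^ ((1:ℝ) - β) * (1 - 1 / (K + 1)) ^ ((1:ℝ) - β) := by
      rw [← Real.mul_rpow (le_of_lt hx) hcoef]
      congr 1
      field_simp
      ring
    -- key inequality
    have key : (1 - β) / (K + 1) ^ β ≤ (K + 1) / (K + 1) ^ β - K / K ^ β := by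
      have h3 : K / K ^ β ≤ (K + 1) / (K + 1) ^ β * (1 - (1 - β) / (K + 1)) := by
        rw [← e1, ← e2, h2]
        have hpos : (0:ℝ) ≤ (K + 1) ^ ((1:ℝ) - β) := (Real.rpow_pos_of_pos hx _).le
        exact mul_le_mul_of_nonneg_left hber hpos
      have h4 : (K + 1) / (K + 1) ^ β * (1 - (1 - β) / (K + 1)) =
          (K + 1) / (K + 1) ^ β - (1 - β) / (K + 1) ^ β := by
        field_simp
      linarith [h4 ▸ h3]
    have e4 : (K + 1) ^ (2 * α) = (K + 1) ^ β * (K + 1) := by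
      rw [show 2 * α = β + 1 by simp [hβdef], Real.rpow_add hx, Real.rpow_one]
    have hrk := hrec k hk
    rw [← hKdef] at hrk
    have push : ((k + 1 : ℕ) : ℝ) = K + 1 := by push_cast [hKdef]; ring
    rw [push]
    have step : (1 - 1 / (K + 1)) * (C' / K ^ β) + C / ((K + 1) ^ β * (K + 1))
        ≤ C' / (K + 1) ^ β := by
      have h5 : (1 - 1 / (K + 1)) * (C' / K ^ β) = C' * (K / K ^ β) / (K + 1) := by
        field_simp
        ring
      have h6 : C' * ((1 - β) / (K + 1) ^ β) ≤ C' * ((K + 1) / (K + 1) ^ β - K / K ^ β) :=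
        mul_le_mul_of_nonneg_left key hC'pos.le
      have hCB : C / (K + 1) ^ β ≤ C' * ((K + 1) / (K + 1) ^ β - K / K ^ β) := by
        refine le_trans ?_ h6
        rw [mul_div_assoc']
        gcongr
      calc (1 - 1 / (K + 1)) * (C' / K ^ β) + C / ((K + 1) ^ β * (K + 1))
          = C' * (K / K ^ β) / (K + 1) + (C / (K + 1) ^ β) / (K + 1) := by
            rw [h5, ← div_div]
        _ ≤ C' * (K / K ^ β) / (K + 1)
              + (C' * ((K + 1) / (K + 1) ^ β - K / K ^ β)) / (K + 1) := by gcongr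
        _ = C' / (K + 1) ^ β := by field_simp; ring
    calc y (k + 1) ≤ (1 - 1 / (K + 1)) * y k + C / (K + 1) ^ (2 * α) := hrk
      _ ≤ (1 - 1 / (K + 1)) * (C' / K ^ β) + C / ((K + 1) ^ β * (K + 1)) := by
          rw [e4]
          have := mul_le_mul_of_nonneg_left ih hcoef
          linarith
      _ ≤ C' / (K + 1) ^ β := step
end
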